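/- arXiv:1003.2086 — 2 statements merged into one kernel-verified Lean document; each statement's English description precedes it below -/
import Mathlib

section
/- Under the testimony model (P(E_T | E ∩ H') = P(E_T | E) and P(E_T | Eᶜ ∩ H') = P(E_T | Eᶜ) for H' ∈ {H, Hᶜ}, all four probabilities P(E ∩ H), P(Eᶜ ∩ H), P(E ∩ Hᶜ), P(Eᶜ ∩ Hᶜ) positive), assume moreover P(E_T | E) > 0, and set λ = P(E_T | Eᶜ)/P(E_T | E) (the lie factor), p = P(E | H), and Õ = P(E | H)/P(E | Hᶜ) (assumed positive and finite). Then the effective Bayes factor based on the testified evidence factorizes as P(E_T | H)/P(E_T | Hᶜ) = Õ · [1 + λ(1/p − 1)] / [1 + λ(Õ/p − 1)]. -/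
open MeasureTheory Real

/-- The probability of an event `A` (as a real number). -/
noncomputable def pr {Ω : Type*} [MeasurableSpace Ω] (P : Measure Ω) (A : Set Ω) : ℝ :=
  (P A).toReal

/-- The conditional probability `P(A | B) = P(A ∩ B) / P(B)`. -/
noncomputable def cpr {Ω : Type*} [MeasurableSpace Ω] (P : Measure Ω) (A B : Set Ω) : ℝ :=
  pr P (A ∩ B) / pr P B

lemma pr_split {Ω : Type*} [MeasurableSpace Ω] (P : Measure Ω) [IsProbabilityMeasure P]
    (E A : Set Ω) (hE : MeasurableSet E) (hA : MeasurableSet A) :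
    pr P (E ∩ A) + pr P (Eᶜ ∩ A) = pr P A := by
  unfold pr
  rw [← ENNReal.toReal_add (measure_ne_top P _) (measure_ne_top P _), ← measure_union]
  · congr 1
    rw [← Set.union_inter_distrib_right, Set.union_compl_self, Set.univ_inter]
  · exact Set.disjoint_left.mpr fun x hx hx' => hx'.1 hx.1
  · exact hE.compl.inter hA

lemma pr_nonneg' {Ω : Type*} [MeasurableSpace Ω] (P : Measure Ω) (A : Set Ω) :
    0 ≤ pr P A := ENNReal.toReal_nonneg

/-- With lie factor `λ = P(Eₜ|Eᶜ)/P(Eₜ|E)`, `p = P(E|H)` and ideal Bayes factor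
`Õ = P(E|H)/P(E|Hᶜ)` (positive and finite), the effective Bayes factor based on the
testified evidence factorizes as `Õ · [1 + λ(1/p − 1)] / [1 + λ(Õ/p − 1)]`. -/
theorem testimony_effective_bayes_factor
    {Ω : Type*} [MeasurableSpace Ω] (P : Measure Ω) [IsProbabilityMeasure P]
    (Et E H : Set Ω)
    (hEt : MeasurableSet Et) (hE : MeasurableSet E) (hH : MeasurableSet H)
    (h1 : 0 < pr P (E ∩ H)) (h2 : 0 < pr P (Eᶜ ∩ H))
    (h3 : 0 < pr P (E ∩ Hᶜ)) (h4 : 0 < pr P (Eᶜ ∩ Hᶜ))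
    (ht1 : cpr P Et (E ∩ H) = cpr P Et E)
    (ht2 : cpr P Et (Eᶜ ∩ H) = cpr P Et Eᶜ)
    (ht3 : cpr P Et (E ∩ Hᶜ) = cpr P Et E)
    (ht4 : cpr P Et (Eᶜ ∩ Hᶜ) = cpr P Et Eᶜ)
    (hTE : 0 < cpr P Et E)
    (hO1 : 0 < cpr P E H) (hO2 : 0 < cpr P E Hᶜ) :
    cpr P Et H / cpr P Et Hᶜ =
      (cpr P E H / cpr P E Hᶜ) *
        (1 + (cpr P Et Eᶜ / cpr P Et E) * (1 / cpr P E H - 1)) /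
        (1 + (cpr P Et Eᶜ / cpr P Et E) *
          ((cpr P E H / cpr P E Hᶜ) / cpr P E H - 1)) := by
  set x1 := pr P (E ∩ H) with hx1
  set x2 := pr P (Eᶜ ∩ H) with hx2
  set y1 := pr P (E ∩ Hᶜ) with hy1
  set y2 := pr P (Eᶜ ∩ Hᶜ) with hy2
  set a := cpr P Et E with ha
  set b := cpr P Et Eᶜ with hb
  have hb0 : 0 ≤ b := div_nonneg (pr_nonneg' P _) (pr_nonneg' P _)
  -- splits
  have hH1 : x1 + x2 = pr P H := pr_split P E H hE hH
  have hH2 : y1 + y2 = pr P Hᶜ := pr_split P E Hᶜ hE hH.compl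
  have hPH : 0 < pr P H := by rw [← hH1]; positivity
  have hPHc : 0 < pr P Hᶜ := by rw [← hH2]; positivity
  -- numerators from testimony hypotheses
  have e1 : pr P (Et ∩ (E ∩ H)) = a * x1 := by
    have := ht1; unfold cpr at this
    field_simp at this
    rw [div_eq_iff (show pr P (E ∩ H) ≠ 0 from h1.ne')] at this; exact this
  have e2 : pr P (Et ∩ (Eᶜ ∩ H)) = b * x2 := by
    have := ht2; unfold cpr at this
    field_simp at this
    rw [div_eq_iff (show pr P (Eᶜ ∩ H) ≠ 0 from h2.ne')] at this; exact this
  have e3 : pr P (Et ∩ (E ∩ Hᶜ)) = a * y1 := by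
    have := ht3; unfold cpr at this
    field_simp at this
    rw [div_eq_iff (show pr P (E ∩ Hᶜ) ≠ 0 from h3.ne')] at this; exact this
  have e4 : pr P (Et ∩ (Eᶜ ∩ Hᶜ)) = b * y2 := by
    have := ht4; unfold cpr at this
    field_simp at this
    rw [div_eq_iff (show pr P (Eᶜ ∩ Hᶜ) ≠ 0 from h4.ne')] at this; exact this
  have sH : pr P (Et ∩ H) = a * x1 + b * x2 := by
    rw [← e1, ← e2, ← pr_split P E (Et ∩ H) hE (hEt.inter hH)]
    congr 1 <;> · congr 1; ext x; constructor <;> exact fun ⟨h, h', h''⟩ => ⟨h', h, h''⟩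
  have sHc : pr P (Et ∩ Hᶜ) = a * y1 + b * y2 := by
    rw [← e3, ← e4, ← pr_split P E (Et ∩ Hᶜ) hE (hEt.inter hH.compl)]
    congr 1 <;> · congr 1; ext x; constructor <;> exact fun ⟨h, h', h''⟩ => ⟨h', h, h''⟩
  have cEtH : cpr P Et H = (a * x1 + b * x2) / (x1 + x2) := by
    unfold cpr; rw [sH, hH1]
  have cEtHc : cpr P Et Hᶜ = (a * y1 + b * y2) / (y1 + y2) := by
    unfold cpr; rw [sHc, hH2]
  have cEH : cpr P E H = x1 / (x1 + x2) := by unfold cpr; rw [hH1]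
  have cEHc : cpr P E Hᶜ = y1 / (y1 + y2) := by unfold cpr; rw [hH2]
  have hden : 0 < a * y1 + b * y2 := by positivity
  rw [cEtH, cEtHc, cEH, cEHc]
  have hx12 : x1 + x2 ≠ 0 := by positivity
  have hy12 : y1 + y2 ≠ 0 := by positivity
  have ha0 : a ≠ 0 := hTE.ne'
  have hx10 : x1 ≠ 0 := h1.ne'
  have hy10 : y1 ≠ 0 := h3.ne'
  have eN : 1 + b / a * (1 / (x1 / (x1 + x2)) - 1) = (a * x1 + b * x2) / (a * x1) := by
    field_simp
    ring
  have eD : 1 + b / a * (x1 / (x1 + x2) / (y1 / (y1 + y2)) / (x1 / (x1 + x2)) - 1)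
      = (a * y1 + b * y2) / (a * y1) := by
    field_simp
    ring
  rw [eN, eD]
  field_simp
end

section
/- Under the testimony model (P(E_T | E ∩ H') = P(E_T | E) and P(E_T | Eᶜ ∩ H') = P(E_T | Eᶜ) for H' ∈ {H, Hᶜ}, all four probabilities P(E ∩ H), P(Eᶜ ∩ H), P(E ∩ Hᶜ), P(Eᶜ ∩ Hᶜ) positive, P(E_T | E) > 0), let λ = P(E_T | Eᶜ)/P(E_T | E) and Õ = P(E | H)/P(E | Hᶜ). If 0 < λ ≤ 1 and Õ ≥ 1, then the effective Bayes factor based on the testimony is capped both by the ideal Bayes factor and by the inverse lie factor: P(E_T | H)/P(E_T | Hᶜ) ≤ min(Õ, 1/λ). Equivalently, the weight of the reported evidence satisfies ΔJL(E_T) ≤ min(ΔJL(E), −log₁₀ λ). -/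
open MeasureTheory Real

lemma pr_split_aux {Ω : Type*} [MeasurableSpace Ω] (P : Measure Ω) [IsFiniteMeasure P]
    (A E : Set Ω) (hE : MeasurableSet E) :
    pr P A = pr P (A ∩ E) + pr P (A ∩ Eᶜ) := by
  unfold pr
  rw [← ENNReal.toReal_add (measure_ne_top _ _) (measure_ne_top _ _)]
  rw [← Set.diff_eq, measure_inter_add_diff A hE]

lemma key_ineq_aux (a b c d t s : ℝ) (ha:0<a)(hb:0<b)(hc:0<c)(hd:0<d)(ht:0<t)(hs:0<s)
    (hst : s ≤ t) (hbc : b*c ≤ a*d) :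
    ((t*a+s*b)/(a+b)) / ((t*c+s*d)/(c+d)) ≤ (a/(a+b))/(c/(c+d)) ∧
    ((t*a+s*b)/(a+b)) / ((t*c+s*d)/(c+d)) ≤ t/s := by
  have e1 : ((t*a+s*b)/(a+b)) / ((t*c+s*d)/(c+d))
      = ((t*a+s*b)*(c+d))/((t*c+s*d)*(a+b)) := by
    field_simp
  have e2 : (a/(a+b))/(c/(c+d)) = (a*(c+d))/(c*(a+b)) := by
    field_simp
  rw [e1, e2]
  constructor
  · rw [div_le_div_iff₀ (by positivity) (by positivity)]
    nlinarith [mul_le_mul_of_nonneg_left hbc (show (0:ℝ) ≤ s*((c+d)*(a+b)) by positivity)]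
  · rw [div_le_div_iff₀ (by positivity) (by positivity)]
    nlinarith [mul_nonneg (mul_nonneg (sub_nonneg.2 hst) ht.le) (mul_pos ha hc).le,
      mul_nonneg (mul_nonneg (sub_nonneg.2 hst) hs.le) (mul_pos hb hd).le,
      mul_nonneg (mul_nonneg (sub_nonneg.2 hst) (add_pos hs ht).le) (mul_pos hb hc).le]

/-- If `0 < λ ≤ 1` (lie factor) and `Õ ≥ 1` (ideal Bayes factor), the effective Bayes
factor based on the testimony is capped both by `Õ` and by `1/λ`; equivalently, the
weight of the reported evidence satisfies `ΔJL(Eₜ) ≤ min(ΔJL(E), −log₁₀ λ)`. -/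
theorem testimony_bayes_factor_upper_bound
    {Ω : Type*} [MeasurableSpace Ω] (P : Measure Ω) [IsProbabilityMeasure P]
    (Et E H : Set Ω)
    (hEt : MeasurableSet Et) (hE : MeasurableSet E) (hH : MeasurableSet H)
    (h1 : 0 < pr P (E ∩ H)) (h2 : 0 < pr P (Eᶜ ∩ H))
    (h3 : 0 < pr P (E ∩ Hᶜ)) (h4 : 0 < pr P (Eᶜ ∩ Hᶜ))
    (ht1 : cpr P Et (E ∩ H) = cpr P Et E)
    (ht2 : cpr P Et (Eᶜ ∩ H) = cpr P Et Eᶜ)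
    (ht3 : cpr P Et (E ∩ Hᶜ) = cpr P Et E)
    (ht4 : cpr P Et (Eᶜ ∩ Hᶜ) = cpr P Et Eᶜ)
    (hTE : 0 < cpr P Et E)
    (hl0 : 0 < cpr P Et Eᶜ / cpr P Et E) (hl1 : cpr P Et Eᶜ / cpr P Et E ≤ 1)
    (hO : 1 ≤ cpr P E H / cpr P E Hᶜ) :
    cpr P Et H / cpr P Et Hᶜ ≤
        min (cpr P E H / cpr P E Hᶜ) (1 / (cpr P Et Eᶜ / cpr P Et E)) ∧
      Real.logb 10 (cpr P Et H / cpr P Et Hᶜ) ≤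
        min (Real.logb 10 (cpr P E H / cpr P E Hᶜ))
          (- Real.logb 10 (cpr P Et Eᶜ / cpr P Et E)) := by
  set a := pr P (E ∩ H) with ha_def
  set b := pr P (Eᶜ ∩ H) with hb_def
  set c := pr P (E ∩ Hᶜ) with hc_def
  set d := pr P (Eᶜ ∩ Hᶜ) with hd_def
  set t := cpr P Et E with ht_def
  set s := cpr P Et Eᶜ with hs_def
  have hs : 0 < s := by
    rcases div_pos_iff.mp hl0 with ⟨h, _⟩ | ⟨_, h⟩
    · exact h
    · linarith
  have hst : s ≤ t := (div_le_one hTE).mp hl1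
  -- intersection probabilities
  have m1 : pr P (Et ∩ (E ∩ H)) = t * a := by
    have := ht1; unfold cpr at this
    rw [div_eq_iff (show pr P (E ∩ H) ≠ 0 from h1.ne')] at this; rw [this]
  have m2 : pr P (Et ∩ (Eᶜ ∩ H)) = s * b := by
    have := ht2; unfold cpr at this
    rw [div_eq_iff (show pr P (Eᶜ ∩ H) ≠ 0 from h2.ne')] at this; rw [this]
  have m3 : pr P (Et ∩ (E ∩ Hᶜ)) = t * c := by
    have := ht3; unfold cpr at this
    rw [div_eq_iff (show pr P (E ∩ Hᶜ) ≠ 0 from h3.ne')] at this; rw [this]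
  have m4 : pr P (Et ∩ (Eᶜ ∩ Hᶜ)) = s * d := by
    have := ht4; unfold cpr at this
    rw [div_eq_iff (show pr P (Eᶜ ∩ Hᶜ) ≠ 0 from h4.ne')] at this; rw [this]
  -- splittings
  have sH : pr P H = a + b := by
    have h := pr_split_aux P H E hE
    rw [Set.inter_comm H E, Set.inter_comm H Eᶜ] at h
    exact h
  have sHc : pr P Hᶜ = c + d := by
    have h := pr_split_aux P Hᶜ E hE
    rw [Set.inter_comm Hᶜ E, Set.inter_comm Hᶜ Eᶜ] at h
    exact h
  have sEtH : pr P (Et ∩ H) = t * a + s * b := by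
    have h := pr_split_aux P (Et ∩ H) E hE
    have e1 : Et ∩ H ∩ E = Et ∩ (E ∩ H) := by ext x; simp [Set.mem_inter_iff]; tauto
    have e2 : Et ∩ H ∩ Eᶜ = Et ∩ (Eᶜ ∩ H) := by ext x; simp [Set.mem_inter_iff]; tauto
    rw [e1, e2, m1, m2] at h
    exact h
  have sEtHc : pr P (Et ∩ Hᶜ) = t * c + s * d := by
    have h := pr_split_aux P (Et ∩ Hᶜ) E hE
    have e1 : Et ∩ Hᶜ ∩ E = Et ∩ (E ∩ Hᶜ) := by ext x; simp [Set.mem_inter_iff]; tauto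
    have e2 : Et ∩ Hᶜ ∩ Eᶜ = Et ∩ (Eᶜ ∩ Hᶜ) := by ext x; simp [Set.mem_inter_iff]; tauto
    rw [e1, e2, m3, m4] at h
    exact h
  -- conditional probabilities
  have cEH : cpr P E H = a / (a + b) := by unfold cpr; rw [sH]
  have cEHc : cpr P E Hᶜ = c / (c + d) := by unfold cpr; rw [sHc]
  have cEtH : cpr P Et H = (t * a + s * b) / (a + b) := by unfold cpr; rw [sH, sEtH]
  have cEtHc : cpr P Et Hᶜ = (t * c + s * d) / (c + d) := by unfold cpr; rw [sHc, sEtHc]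
  have hbc : b * c ≤ a * d := by
    rw [cEH, cEHc] at hO
    rw [le_div_iff₀ (by positivity), one_mul, div_le_div_iff₀ (by positivity) (by positivity)] at hO
    nlinarith
  obtain ⟨K1, K2⟩ := key_ineq_aux a b c d t s h1 h2 h3 h4 hTE hs hst hbc
  rw [cEH, cEHc, cEtH, cEtHc]
  have hRpos : 0 < ((t*a+s*b)/(a+b)) / ((t*c+s*d)/(c+d)) := by positivity
  have hOpos : 0 < (a/(a+b))/(c/(c+d)) := by positivity
  constructor
  · exact le_min K1 (by rw [one_div_div]; exact K2)
  · apply le_min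
    · exact Real.logb_le_logb_of_le (by norm_num) hRpos K1
    · rw [← Real.logb_inv, inv_div]
      exact Real.logb_le_logb_of_le (by norm_num) hRpos K2
end
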